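/- For every finite forest F = (V, E) (a simple graph with no cycles) and all elements v, x of a commutative ring, the subgraph component polynomial is obtained from the subgraph counting polynomial by the substitution Q(F, v, x) = H(F, v, x, 1 − x). -/

import Mathlib

open Finset

/-- The edge set of a simple graph on a finite vertex type, as a `Finset`. -/
noncomputable def edgeFinset' {α : Type*} [Fintype α] (G : SimpleGraph α) :
    Finset (Sym2 α) :=
  (Set.toFinite G.edgeSet).toFinset

/-- The number of connected components of a graph. -/
noncomputable def ncomp {α : Type*} (G : SimpleGraph α) : ℕ :=
  Nat.card G.ConnectedComponent

/-- The Potts model `Z(G, x, y) = Σ_{A ⊆ E} x^{c(V,A)} y^{|A|}`, where `c(V,A)` is the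
number of connected components of the spanning subgraph `(V, A)`. -/
noncomputable def potts {α : Type*} [Fintype α] {R : Type*} [CommRing R]
    (G : SimpleGraph α) (x y : R) : R :=
  ∑ A ∈ (edgeFinset' G).powerset,
    x ^ ncomp (SimpleGraph.fromEdgeSet (A : Set (Sym2 α))) * y ^ A.card

/-- The subgraph counting polynomial
`H(G, v, x, y) = Σ_{(W,F), W ⊆ V, F ⊆ E(G[W])} v^{|W|} x^{c(W,F)} y^{|F|}`,
where `c(W,F)` is the number of connected components of the graph `(W, F)`. -/
noncomputable def scp {α : Type*} [Fintype α] {R : Type*} [CommRing R]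
    (G : SimpleGraph α) (v x y : R) : R :=
  ∑ W : Finset α, ∑ F ∈ (edgeFinset' (G.induce (W : Set α))).powerset,
    v ^ W.card * x ^ ncomp (SimpleGraph.fromEdgeSet (F : Set (Sym2 (W : Set α)))) * y ^ F.card

/-- The subgraph component polynomial `Q(G, v, x) = Σ_{W ⊆ V} v^{|W|} x^{k(G[W])}`. -/
noncomputable def subgraphCompPoly {α : Type*} [Fintype α] {R : Type*} [CommRing R]
    (G : SimpleGraph α) (v x : R) : R :=
  ∑ W : Finset α, v ^ W.card * x ^ ncomp (G.induce (W : Set α))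

/-- The number of bad monochromatic edges of a coloring `φ : α → Fin x` (colors `1, …, x`
identified with `Fin x` via `c ↦ c + 1`): edges all of whose vertices get the same color
`c ≤ y`, i.e. `(c : ℕ) < y`. -/
noncomputable def badCount {α : Type*} {x : ℕ} (G : SimpleGraph α) (y : ℕ)
    (φ : α → Fin x) : ℕ :=
  {e ∈ G.edgeSet | ∃ c : Fin x, (c : ℕ) < y ∧ ∀ w ∈ e, φ w = c}.ncard

/-- The number of monochromatic edges of a coloring `φ : α → Fin x`. -/
noncomputable def monoCount {α : Type*} {x : ℕ} (G : SimpleGraph α)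
    (φ : α → Fin x) : ℕ :=
  {e ∈ G.edgeSet | ∃ c : Fin x, ∀ w ∈ e, φ w = c}.ncard

/-- The bad coloring polynomial `χ̃(G, x, z) = Σ_{φ : V → {1,…,x}} z^{m(φ)}`, where `m(φ)`
is the number of monochromatic edges of `φ`. -/
noncomputable def badChrom {α : Type*} [Fintype α] [DecidableEq α] {R : Type*} [CommRing R]
    (G : SimpleGraph α) (x : ℕ) (z : R) : R :=
  ∑ φ : α → Fin x, z ^ monoCount G φ

/-- The trivariate chromatic polynomial `P̃(G, x, y, z) = Σ_{φ : V → {1,…,x}} z^{b(φ)}`,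
where `b(φ)` is the number of bad monochromatic edges of `φ` (monochromatic in a color
`c ≤ y`). -/
noncomputable def triChrom {α : Type*} [Fintype α] [DecidableEq α] {R : Type*} [CommRing R]
    (G : SimpleGraph α) (x y : ℕ) (z : R) : R :=
  ∑ φ : α → Fin x, z ^ badCount G y φ

/-- The subgraph counting polynomial as a polynomial with integer coefficients in the
variables `v = X 0`, `x = X 1`, `y = X 2`. -/
noncomputable def scpPoly {α : Type*} [Fintype α] (G : SimpleGraph α) :
    MvPolynomial (Fin 3) ℤ :=
  scp G (MvPolynomial.X 0) (MvPolynomial.X 1) (MvPolynomial.X 2)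

section Aux
open SimpleGraph

variable {α : Type*}

lemma mem_edgeFinset'_iff [Fintype α] {G : SimpleGraph α} {e : Sym2 α} :
    e ∈ edgeFinset' G ↔ e ∈ G.edgeSet := Set.Finite.mem_toFinset _

lemma isAcyclic_anti {G G' : SimpleGraph α} (h : G' ≤ G) (hG : G.IsAcyclic) :
    G'.IsAcyclic := fun _v c hc => hG (c.mapLe h) (hc.mapLe h)

lemma reach_cases {u v a b : α} {G : SimpleGraph α}
    (hb : ¬(G \ fromEdgeSet {s(u, v)}).Reachable u v)
    (h : G.Reachable a b) :
    (G \ fromEdgeSet {s(u, v)}).Reachable a b ∨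
      ((G \ fromEdgeSet {s(u, v)}).Reachable a u ∧ (G \ fromEdgeSet {s(u, v)}).Reachable b v) ∨
      ((G \ fromEdgeSet {s(u, v)}).Reachable a v ∧ (G \ fromEdgeSet {s(u, v)}).Reachable b u) := by
  set G' := G \ fromEdgeSet {s(u, v)} with hG'
  rw [SimpleGraph.reachable_iff_reflTransGen] at h
  induction h with
  | refl => exact Or.inl (Reachable.refl a)
  | @tail b' c _ hadj ih =>
    by_cases hadj' : G'.Adj b' c
    · rcases ih with h1 | ⟨h1, h2⟩ | ⟨h1, h2⟩
      · exact Or.inl (h1.trans hadj'.reachable)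
      · exact Or.inr (Or.inl ⟨h1, hadj'.reachable.symm.trans h2⟩)
      · exact Or.inr (Or.inr ⟨h1, hadj'.reachable.symm.trans h2⟩)
    · have heq : s(b', c) = s(u, v) := by
        by_contra hx
        apply hadj'
        rw [hG', sdiff_adj]
        exact ⟨hadj, fun hf => hx (by simpa using ((fromEdgeSet_adj _).mp hf).1)⟩
      rw [Sym2.eq_iff] at heq
      rcases heq with ⟨rfl, rfl⟩ | ⟨rfl, rfl⟩
      · rcases ih with h1 | ⟨h1, h2⟩ | ⟨h1, h2⟩
        · exact Or.inr (Or.inl ⟨h1, Reachable.refl _⟩)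
        · exact absurd h2 hb
        · exact Or.inl h1
      · rcases ih with h1 | ⟨h1, h2⟩ | ⟨h1, h2⟩
        · exact Or.inr (Or.inr ⟨h1, Reachable.refl _⟩)
        · exact Or.inl h1
        · exact absurd h2.symm hb

lemma card_cc_delete [Fintype α] [DecidableEq α] {G : SimpleGraph α} {u v : α}
    (hadj : G.Adj u v) (hb : ¬(G \ fromEdgeSet {s(u, v)}).Reachable u v) :
    Nat.card (G \ fromEdgeSet {s(u, v)}).ConnectedComponent
      = Nat.card G.ConnectedComponent + 1 := by
  classical
  set G' := G \ fromEdgeSet {s(u, v)} with hG'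
  have hle : G' ≤ G := sdiff_le
  set π : G'.ConnectedComponent → G.ConnectedComponent :=
    ConnectedComponent.map (Hom.ofLE hle) with hπdef
  have hπ : ∀ w : α, π (Quot.mk G'.Reachable w) = G.connectedComponentMk w :=
    fun w => ConnectedComponent.map_mk _ _
  have hreach : ∀ {a b : α}, G'.Reachable a b → G.Reachable a b :=
    fun h => h.mono hle
  have hcard : ∀ c : G.ConnectedComponent,
      Nat.card {c' : G'.ConnectedComponent // π c' = c} =
        if c = G.connectedComponentMk u then 2 else 1 := by
    intro c
    split_ifs with hc
    · subst hc
      rw [Nat.card_eq_two_iff]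
      have h1 : π (G'.connectedComponentMk u) = G.connectedComponentMk u := hπ u
      have h2 : π (G'.connectedComponentMk v) = G.connectedComponentMk u :=
        (hπ v).trans (ConnectedComponent.sound hadj.symm.reachable)
      refine ⟨⟨G'.connectedComponentMk u, h1⟩, ⟨G'.connectedComponentMk v, h2⟩, ?_, ?_⟩
      · intro hxy
        apply hb
        exact (ConnectedComponent.eq).mp (congrArg Subtype.val hxy)
      · ext z
        simp only [Set.mem_insert_iff, Set.mem_singleton_iff, Set.mem_univ, iff_true]
        obtain ⟨z, hz⟩ := z
        obtain ⟨w, rfl⟩ := z.exists_rep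
        have hw : G.Reachable w u :=
          (ConnectedComponent.eq).mp ((hπ w).symm.trans hz)
        rcases reach_cases hb hw with h3 | ⟨h3, h4⟩ | ⟨h3, h4⟩
        · exact Or.inl (Subtype.ext (ConnectedComponent.sound h3))
        · exact absurd h4 hb
        · exact Or.inr (Subtype.ext (ConnectedComponent.sound h3))
    · rw [Nat.card_eq_one_iff_unique]
      constructor
      · constructor
        intro ⟨c1, hc1⟩ ⟨c2, hc2⟩
        obtain ⟨w1, rfl⟩ := c1.exists_rep
        obtain ⟨w2, rfl⟩ := c2.exists_rep
        have h12 : G.Reachable w1 w2 :=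
          (ConnectedComponent.eq).mp
            (((hπ w1).symm.trans hc1).trans ((hπ w2).symm.trans hc2).symm)
        rcases reach_cases hb h12 with h3 | ⟨h3, h4⟩ | ⟨h3, h4⟩
        · exact Subtype.ext (ConnectedComponent.sound h3)
        · exact absurd (hc1.symm.trans ((hπ w1).trans
            (ConnectedComponent.sound (hreach h3)))) hc
        · exact absurd (hc2.symm.trans ((hπ w2).trans
            (ConnectedComponent.sound (hreach h4)))) hc
      · obtain ⟨w, rfl⟩ := c.exists_rep
        exact ⟨⟨G'.connectedComponentMk w, hπ w⟩⟩
  have hsig : Nat.card G'.ConnectedComponent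
      = ∑ c : G.ConnectedComponent, Nat.card {c' : G'.ConnectedComponent // π c' = c} := by
    rw [Nat.card_eq_fintype_card, ← Fintype.card_congr (Equiv.sigmaFiberEquiv π),
      Fintype.card_sigma]
    exact Finset.sum_congr rfl fun c _ => (Nat.card_eq_fintype_card).symm
  rw [hsig]
  have : ∀ c : G.ConnectedComponent,
      Nat.card {c' : G'.ConnectedComponent // π c' = c}
        = 1 + if c = G.connectedComponentMk u then 1 else 0 := by
    intro c
    rw [hcard c]
    split_ifs <;> rfl
  rw [Finset.sum_congr rfl fun c _ => this c, Finset.sum_add_distrib, Finset.sum_const,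
    Finset.sum_ite_eq' Finset.univ (G.connectedComponentMk u) (fun _ => 1)]
  simp [Nat.card_eq_fintype_card, mul_comm, Nat.add_comm]

lemma acyclic_card {α : Type*} [Fintype α] (G : SimpleGraph α) (hG : G.IsAcyclic) :
    ncomp G + (edgeFinset' G).card = Fintype.card α := by
  classical
  unfold ncomp
  generalize hn : (edgeFinset' G).card = n
  induction n generalizing G with
  | zero =>
    have hbot : G = ⊥ := by
      rw [← SimpleGraph.edgeSet_eq_empty]
      have h0 : edgeFinset' G = ∅ := Finset.card_eq_zero.mp hn
      have := Set.Finite.toFinset_eq_empty.mp h0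
      exact this
    subst hbot
    have hbij : Function.Bijective ((⊥ : SimpleGraph α).connectedComponentMk) := by
      constructor
      · intro a b h
        exact SimpleGraph.reachable_bot.mp ((ConnectedComponent.eq).mp h)
      · intro c
        obtain ⟨w, hw⟩ := c.exists_rep
        exact ⟨w, hw⟩
    rw [← Nat.card_eq_fintype_card]
    rw [← Nat.card_eq_of_bijective _ hbij]
    omega
  | succ n ih =>
    have hne : (edgeFinset' G).Nonempty := Finset.card_pos.mp (by omega)
    obtain ⟨e, he⟩ := hne
    have heS : e ∈ G.edgeSet := mem_edgeFinset'_iff.mp he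
    obtain ⟨u, v, hadj⟩ : ∃ u v, G.Adj u v := by
      revert heS
      refine Sym2.ind (fun a b h => ?_) e
      exact ⟨a, b, h⟩
    set G' := G \ fromEdgeSet {s(u, v)} with hG'
    have hle : G' ≤ G := sdiff_le
    have hG'ac : G'.IsAcyclic := isAcyclic_anti hle hG
    have hbridge : ¬G'.Reachable u v :=
      (isBridge_iff).mp ((isAcyclic_iff_forall_adj_isBridge.mp hG) hadj)
    have hmem : s(u, v) ∈ edgeFinset' G := mem_edgeFinset'_iff.mpr (G.mem_edgeSet.mpr hadj)
    have hE : edgeFinset' G' = (edgeFinset' G).erase s(u, v) := by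
      ext f
      simp only [mem_edgeFinset'_iff, Finset.mem_erase, hG', SimpleGraph.edgeSet_sdiff,
        SimpleGraph.edgeSet_fromEdgeSet, Set.mem_diff, Set.mem_singleton_iff, Set.mem_setOf_eq]
      have hnd := fun hf : f ∈ G.edgeSet => G.not_isDiag_of_mem_edgeSet hf
      tauto
    have hcard' : (edgeFinset' G').card = n := by
      rw [hE, Finset.card_erase_of_mem hmem, hn]
      omega
    have hih := ih G' hG'ac hcard'
    have hdel := card_cc_delete hadj hbridge
    rw [← hG'] at hdel
    omega

lemma sum_powerset_binom {β : Type*} {R : Type*} [CommRing R] (s : Finset β) (x : R) :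
    ∑ A ∈ s.powerset, x ^ (s.card - A.card) * (1 - x) ^ A.card = 1 := by
  classical
  have h1 : ∏ _i ∈ s, ((1 - x) + x) = 1 := by
    rw [Finset.prod_const]
    rw [show (1 - x) + x = 1 by ring, one_pow]
  rw [Finset.prod_add] at h1
  refine Eq.trans ?_ h1
  refine Finset.sum_congr rfl fun A hA => ?_
  rw [Finset.prod_const, Finset.prod_const, Finset.card_sdiff_of_subset (Finset.mem_powerset.mp hA)]
  ring

end Aux

open SimpleGraph in
/-- For a forest `F`, the subgraph component polynomial is obtained from
the subgraph counting polynomial: `Q(F, v, x) = H(F, v, x, 1 − x)`. -/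
theorem subgraphCompPoly_eq_scp_of_isAcyclic {V : Type*} [Fintype V] {R : Type*}
    [CommRing R] (F : SimpleGraph V) (hF : F.IsAcyclic) (v x : R) :
    subgraphCompPoly F v x = scp F v x (1 - x) := by
  classical
  unfold subgraphCompPoly scp
  refine Finset.sum_congr rfl fun W _ => ?_
  set H := F.induce ((W : Set V)) with hH
  have hcardW : Fintype.card ((W : Set V) : Type _) = W.card := by
    rw [Fintype.card_congr (Equiv.subtypeEquivRight (fun z => Finset.mem_coe))]
    exact Fintype.card_coe W
  have hHac : H.IsAcyclic := by
    intro a c hc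
    exact hF _ (hc.map (f := (SimpleGraph.Embedding.induce (G := F) (W : Set V)).toHom)
      (SimpleGraph.Embedding.induce (G := F) (W : Set V)).injective)
  have hA := acyclic_card H hHac
  rw [hcardW] at hA
  set m := (edgeFinset' H).card with hm
  have hterm : ∀ A ∈ (edgeFinset' H).powerset,
      v ^ W.card * x ^ ncomp (SimpleGraph.fromEdgeSet (A : Set (Sym2 ((W : Set V)))))
          * (1 - x) ^ A.card
        = (v ^ W.card * x ^ ncomp H) * (x ^ (m - A.card) * (1 - x) ^ A.card) := by
    intro A hAp
    have hAs : A ⊆ edgeFinset' H := Finset.mem_powerset.mp hAp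
    have hsub : (A : Set (Sym2 ((W : Set V)))) ⊆ H.edgeSet :=
      fun e he => mem_edgeFinset'_iff.mp (hAs he)
    have hle2 : SimpleGraph.fromEdgeSet (A : Set (Sym2 ((W : Set V)))) ≤ H :=
      (SimpleGraph.fromEdgeSet_mono hsub).trans_eq (SimpleGraph.fromEdgeSet_edgeSet H)
    have hacA : (SimpleGraph.fromEdgeSet (A : Set (Sym2 ((W : Set V))))).IsAcyclic :=
      isAcyclic_anti hle2 hHac
    have hEA : edgeFinset' (SimpleGraph.fromEdgeSet (A : Set (Sym2 ((W : Set V))))) = A := by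
      ext f
      simp only [mem_edgeFinset'_iff, SimpleGraph.edgeSet_fromEdgeSet, Set.mem_diff,
        Set.mem_setOf_eq, Finset.mem_coe]
      exact ⟨fun h => h.1, fun h => ⟨h, H.not_isDiag_of_mem_edgeSet (hsub h)⟩⟩
    have hcA := acyclic_card _ hacA
    rw [hEA, hcardW] at hcA
    have hAm : A.card ≤ m := Finset.card_le_card hAs
    have hexp : ncomp (SimpleGraph.fromEdgeSet (A : Set (Sym2 ((W : Set V)))))
        = ncomp H + (m - A.card) := by omega
    rw [hexp, pow_add]
    ring
  rw [Finset.sum_congr rfl hterm, ← Finset.mul_sum, sum_powerset_binom, mul_one]
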